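/- Let e be a partial expression and σ_d a partial data substitution such that {x₁,…,x_m} = {x ∈ dvar(e) | xσ_d ≠ x} and xᵢσ_d = t'ᵢ for 1 ≤ i ≤ m, and assume each xᵢ occurs at most once in e. Let V be an environment such that eσ_d ∈ Expr^{τ'}_{Σ⊥}(V). Then there exist types τ'₁,…,τ'_m such that t'ᵢ ∈ Term^{τ'ᵢ}_{Σ⊥}(V) for 1 ≤ i ≤ m and V[x₁:τ'₁,…,x_m:τ'_m] ⊢ e : τ'. -/

import Mathlib

namespace ACRWL

/-- Partial expressions: data variables, bottom, data constructor applications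
and defined function applications (symbols named by natural numbers). -/
inductive Expr : Type where
  | var : ℕ → Expr
  | bot : Expr
  | con : ℕ → List Expr → Expr
  | fn  : ℕ → List Expr → Expr

namespace Expr

/-- Occurrence of a data variable in an expression. -/
inductive Occurs (x : ℕ) : Expr → Prop where
  | var : Occurs x (var x)
  | con {c : ℕ} {es : List Expr} {e : Expr} : e ∈ es → Occurs x e → Occurs x (con c es)
  | fn {f : ℕ} {es : List Expr} {e : Expr} : e ∈ es → Occurs x e → Occurs x (fn f es)

/-- Partial data terms: built from variables, ⊥ and data constructors only. -/
inductive IsTerm : Expr → Prop where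
  | var (x : ℕ) : IsTerm (var x)
  | bot : IsTerm bot
  | con {c : ℕ} {es : List Expr} : (∀ e ∈ es, IsTerm e) → IsTerm (con c es)

/-- Total expressions: no occurrence of ⊥. -/
inductive NoBot : Expr → Prop where
  | var (x : ℕ) : NoBot (var x)
  | con {c : ℕ} {es : List Expr} : (∀ e ∈ es, NoBot e) → NoBot (con c es)
  | fn {f : ℕ} {es : List Expr} : (∀ e ∈ es, NoBot e) → NoBot (fn f es)

/-- Total data terms. -/
def IsTotalTerm (e : Expr) : Prop := IsTerm e ∧ NoBot e

/-- Application of a data substitution. -/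
def subst (σ : ℕ → Expr) : Expr → Expr
  | var x => σ x
  | bot => bot
  | con c es => con c (es.attach.map fun e => subst σ e.1)
  | fn f es => fn f (es.attach.map fun e => subst σ e.1)
termination_by e => sizeOf e
decreasing_by
  all_goals (simp only [Expr.con.sizeOf_spec, Expr.fn.sizeOf_spec]; have := List.sizeOf_lt_of_mem e.2; omega)

/-- Number of occurrences of the variable `x`. -/
def varCount (x : ℕ) : Expr → ℕ
  | var y => if y = x then 1 else 0
  | bot => 0
  | con _ es => (es.attach.map fun e => varCount x e.1).sum
  | fn _ es => (es.attach.map fun e => varCount x e.1).sum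
termination_by e => sizeOf e
decreasing_by
  all_goals (simp only [Expr.con.sizeOf_spec, Expr.fn.sizeOf_spec]; have := List.sizeOf_lt_of_mem e.2; omega)

end Expr

/-- A set of equational axioms between (total data) terms. -/
abbrev Axioms := Set (Expr × Expr)

/-- A data substitution mapping every variable to a partial data term. -/
def TermSub (σ : ℕ → Expr) : Prop := ∀ x, (σ x).IsTerm

/-- `σ` is safe for `t`: variables occurring more than once in `t`
are mapped to total data terms. -/
def SafeSub (σ : ℕ → Expr) (t : Expr) : Prop :=
  ∀ x, 2 ≤ Expr.varCount x t → Expr.IsTotalTerm (σ x)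

/-- Well-formed set of equational axioms: a finite set of equations between
total data terms. -/
def WfAxioms (C : Axioms) : Prop :=
  C.Finite ∧ ∀ p ∈ C, Expr.IsTotalTerm p.1 ∧ Expr.IsTotalTerm p.2

/-- `[C]_⊒` : the instances of the axioms of `C`, read in both directions,
under safe partial data substitutions. -/
def CInstances (C : Axioms) : Set (Expr × Expr) :=
  { q | ∃ p ∈ C, ∃ σ : ℕ → Expr, TermSub σ ∧
      ((SafeSub σ p.1 ∧ q = (p.1.subst σ, p.2.subst σ)) ∨
       (SafeSub σ p.2 ∧ q = (p.2.subst σ, p.1.subst σ))) }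

/-- Every axiom is regular : both sides have the same data variables. -/
def RegularAxioms (C : Axioms) : Prop :=
  ∀ p ∈ C, ∀ x, Expr.Occurs x p.1 ↔ Expr.Occurs x p.2

/-- Every axiom is non-collapsing : neither side is a variable. -/
def NonCollapsing (C : Axioms) : Prop :=
  ∀ p ∈ C, (∀ x, p.1 ≠ Expr.var x) ∧ (∀ x, p.2 ≠ Expr.var x)

/-- Strongly regular set of axioms. -/
def StronglyRegular (C : Axioms) : Prop := RegularAxioms C ∧ NonCollapsing C

/-- The inequational calculus associated to `C`, deriving approximation
inequalities `s ⊒ t` between partial data terms. -/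
inductive Geq (C : Axioms) : Expr → Expr → Prop where
  | bot {t : Expr} : t.IsTerm → Geq C t Expr.bot
  | refl {t : Expr} : t.IsTerm → Geq C t t
  | trans {t t' t'' : Expr} : Geq C t t' → Geq C t' t'' → Geq C t t''
  | mono {c : ℕ} {ts ss : List Expr} : ts.length = ss.length →
      (∀ p ∈ ts.zip ss, Geq C p.1 p.2) → Geq C (Expr.con c ts) (Expr.con c ss)
  | ax {s t : Expr} : (s, t) ∈ CInstances C → Geq C s t

/-- `s ≈_C t` iff `s ⊒_C t` and `t ⊒_C s`. -/
def EqC (C : Axioms) (s t : Expr) : Prop := Geq C s t ∧ Geq C t s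

end ACRWL

namespace ACRWL

/-- Polymorphic types built from type variables and type constructors. -/
inductive Ty : Type where
  | tvar : ℕ → Ty
  | tcon : ℕ → List Ty → Ty

namespace Ty

/-- Occurrence of a type variable in a type. -/
inductive OccursT (α : ℕ) : Ty → Prop where
  | tvar : OccursT α (tvar α)
  | tcon {K : ℕ} {τs : List Ty} {τ : Ty} : τ ∈ τs → OccursT α τ → OccursT α (tcon K τs)

/-- Application of a type substitution. -/
def subst (σ : ℕ → Ty) : Ty → Ty
  | tvar α => σ α
  | tcon K τs => tcon K (τs.attach.map fun τ => subst σ τ.1)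
termination_by τ => sizeOf τ
decreasing_by
  all_goals (simp only [Ty.tcon.sizeOf_spec]; have := List.sizeOf_lt_of_mem τ.2; omega)

end Ty

/-- A principal type declaration `(τ₁,…,τₙ) → τ`. -/
structure Decl : Type where
  args : List Ty
  res : Ty

/-- Transparency: every type variable of the argument types occurs in the
result type. -/
def Decl.Transparent (d : Decl) : Prop :=
  ∀ α : ℕ, (∃ τ ∈ d.args, Ty.OccursT α τ) → Ty.OccursT α d.res

/-- Instance of a declaration under a type substitution. -/
def Decl.substT (σt : ℕ → Ty) (d : Decl) : Decl :=
  ⟨d.args.map (Ty.subst σt), d.res.subst σt⟩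

/-- A variant of a declaration: a renaming of its type variables. -/
def IsVariant (d d' : Decl) : Prop :=
  ∃ ρ : ℕ → ℕ, Function.Injective ρ ∧ d' = d.substT (fun α => Ty.tvar (ρ α))

/-- A polymorphic signature: (optional) principal type declarations for data
constructors and for defined function symbols, the former transparent. -/
structure Signature : Type where
  dc : ℕ → Option Decl
  fs : ℕ → Option Decl
  dc_trans : ∀ c d, dc c = some d → Decl.Transparent d

/-- An environment: at most one type annotation per data variable. -/
abbrev Env := ℕ → Option Ty

/-- Instance of an environment under a type substitution. -/
def Env.substT (V : Env) (σt : ℕ → Ty) : Env := fun x => (V x).map (Ty.subst σt)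

/-- The type inference system: `HasType Sg V e τ` is the judgement
`V ⊢_{Σ⊥} e : τ`.  The symbol `⊥` has principal type `⊥ : → α`, hence
every type is an admissible instance for it. -/
inductive HasType (Sg : Signature) (V : Env) : Expr → Ty → Prop where
  | var {x : ℕ} {τ : Ty} : V x = some τ → HasType Sg V (Expr.var x) τ
  | bot (τ : Ty) : HasType Sg V Expr.bot τ
  | con {c : ℕ} {es : List Expr} {d : Decl} {σt : ℕ → Ty} :
      Sg.dc c = some d → es.length = d.args.length →
      (∀ p ∈ es.zip d.args, HasType Sg V p.1 (Ty.subst σt p.2)) →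
      HasType Sg V (Expr.con c es) (Ty.subst σt d.res)
  | fn {f : ℕ} {es : List Expr} {d : Decl} {σt : ℕ → Ty} :
      Sg.fs f = some d → es.length = d.args.length →
      (∀ p ∈ es.zip d.args, HasType Sg V p.1 (Ty.subst σt p.2)) →
      HasType Sg V (Expr.fn f es) (Ty.subst σt d.res)

/-- Occurrence of a function symbol in an expression. -/
inductive FnOccurs (f : ℕ) : Expr → Prop where
  | head {es : List Expr} : FnOccurs f (Expr.fn f es)
  | con {c : ℕ} {es : List Expr} {e : Expr} : e ∈ es → FnOccurs f e → FnOccurs f (Expr.con c es)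
  | fn {g : ℕ} {es : List Expr} {e : Expr} : e ∈ es → FnOccurs f e → FnOccurs f (Expr.fn g es)

end ACRWL

namespace ACRWL

section Aux

lemma subst_var (σ : ℕ → Expr) (x : ℕ) : Expr.subst σ (.var x) = σ x := by
  simp [Expr.subst]

lemma subst_bot (σ : ℕ → Expr) : Expr.subst σ .bot = .bot := by
  simp [Expr.subst]

lemma subst_con (σ : ℕ → Expr) (c : ℕ) (es : List Expr) :
    Expr.subst σ (.con c es) = .con c (es.map (Expr.subst σ)) := by
  rw [Expr.subst]
  simp [List.attach_map_val]

lemma subst_fn (σ : ℕ → Expr) (f : ℕ) (es : List Expr) :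
    Expr.subst σ (.fn f es) = .fn f (es.map (Expr.subst σ)) := by
  rw [Expr.subst]
  simp [List.attach_map_val]

lemma varCount_con (x c : ℕ) (es : List Expr) :
    Expr.varCount x (.con c es) = (es.map (Expr.varCount x)).sum := by
  rw [Expr.varCount]
  simp [List.attach_map_val]

lemma varCount_fn (x f : ℕ) (es : List Expr) :
    Expr.varCount x (.fn f es) = (es.map (Expr.varCount x)).sum := by
  rw [Expr.varCount]
  simp [List.attach_map_val]

lemma one_le_varCount_of_occurs {x : ℕ} {e : Expr} (h : Expr.Occurs x e) :
    1 ≤ Expr.varCount x e := by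
  induction h with
  | var => simp [Expr.varCount]
  | @con c es e' hmem _ ih =>
      rw [varCount_con]
      have h1 : Expr.varCount x e' ∈ es.map (Expr.varCount x) :=
        List.mem_map.mpr ⟨e', hmem, rfl⟩
      have := List.single_le_sum (fun _ _ => Nat.zero_le _) _ h1
      omega
  | @fn f es e' hmem _ ih =>
      rw [varCount_fn]
      have h1 : Expr.varCount x e' ∈ es.map (Expr.varCount x) :=
        List.mem_map.mpr ⟨e', hmem, rfl⟩
      have := List.single_le_sum (fun _ _ => Nat.zero_le _) _ h1
      omega

lemma two_le_sum : ∀ (l : List ℕ) (i j : ℕ) (hi : i < l.length) (hj : j < l.length),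
    i ≠ j → 1 ≤ l[i] → 1 ≤ l[j] → 2 ≤ l.sum := by
  intro l
  induction l with
  | nil => intro i j hi; simp at hi
  | cons a t ih =>
    intro i j hi hj hij h1 h2
    match i, j with
    | 0, 0 => omega
    | 0, j+1 =>
      simp only [List.getElem_cons_zero] at h1
      simp only [List.getElem_cons_succ] at h2
      have hj' : j < t.length := by simpa using hj
      have : t[j] ≤ t.sum :=
        List.single_le_sum (fun _ _ => Nat.zero_le _) _ (List.getElem_mem hj')
      simp only [List.sum_cons]; omega
    | i+1, 0 =>
      simp only [List.getElem_cons_zero] at h2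
      simp only [List.getElem_cons_succ] at h1
      have hi' : i < t.length := by simpa using hi
      have : t[i] ≤ t.sum :=
        List.single_le_sum (fun _ _ => Nat.zero_le _) _ (List.getElem_mem hi')
      simp only [List.sum_cons]; omega
    | i+1, j+1 =>
      have := ih i j (by simpa using hi) (by simpa using hj) (by omega)
        (by simpa using h1) (by simpa using h2)
      simp only [List.sum_cons]; omega

lemma hasType_of_agree {Sg : Signature} {V W : Env} {e : Expr} {τ : Ty}
    (h : HasType Sg V e τ) (hag : ∀ x, Expr.Occurs x e → V x = W x) :
    HasType Sg W e τ := by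
  induction h generalizing W with
  | @var x τ hx => exact HasType.var ((hag x Expr.Occurs.var).symm.trans hx)
  | bot τ => exact HasType.bot τ
  | @con c es d σt hd hlen hargs ih =>
      refine HasType.con hd hlen ?_
      intro p hp
      refine ih p hp ?_
      intro x hx
      have hmem : p.1 ∈ es := by
        have := List.of_mem_zip (a := p.1) (b := p.2) (by simpa using hp)
        exact this.1
      exact hag x (Expr.Occurs.con hmem hx)
  | @fn f es d σt hd hlen hargs ih =>
      refine HasType.fn hd hlen ?_
      intro p hp
      refine ih p hp ?_
      intro x hx
      have hmem : p.1 ∈ es := by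
        have := List.of_mem_zip (a := p.1) (b := p.2) (by simpa using hp)
        exact this.1
      exact hag x (Expr.Occurs.fn hmem hx)

/-- Combine the environments produced for the members of a list. -/
lemma exists_W_list (Sg : Signature) (V : Env) (σd : ℕ → Expr)
    (es : List Expr) (τs : List Ty) (hlen : es.length = τs.length)
    (hcnt : ∀ x, σd x ≠ Expr.var x → (es.map (Expr.varCount x)).sum ≤ 1)
    (IH : ∀ (i : ℕ) (hi : i < es.length), ∃ W : Env,
        (∀ x, Expr.Occurs x es[i] → σd x ≠ Expr.var x →
          ∃ τx, W x = some τx ∧ HasType Sg V (σd x) τx) ∧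
        (∀ x, ¬(Expr.Occurs x es[i] ∧ σd x ≠ Expr.var x) → W x = V x) ∧
        HasType Sg W es[i] (τs[i]'(hlen ▸ hi))) :
    ∃ W : Env,
      (∀ x, (∃ e ∈ es, Expr.Occurs x e) → σd x ≠ Expr.var x →
          ∃ τx, W x = some τx ∧ HasType Sg V (σd x) τx) ∧
      (∀ x, ¬((∃ e ∈ es, Expr.Occurs x e) ∧ σd x ≠ Expr.var x) → W x = V x) ∧
      (∀ p ∈ es.zip τs, HasType Sg W p.1 p.2) := by
  classical
  choose F hF using IH
  have huniq : ∀ x, σd x ≠ Expr.var x → ∀ (i j : ℕ) (hi : i < es.length)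
      (hj : j < es.length), Expr.Occurs x es[i] → Expr.Occurs x es[j] → i = j := by
    intro x hx i j hi hj hoi hoj
    by_contra hij
    have h1 : 1 ≤ (es.map (Expr.varCount x))[i]'(by simpa using hi) := by
      simpa using one_le_varCount_of_occurs hoi
    have h2 : 1 ≤ (es.map (Expr.varCount x))[j]'(by simpa using hj) := by
      simpa using one_le_varCount_of_occurs hoj
    have := two_le_sum (es.map (Expr.varCount x)) i j (by simpa using hi)
      (by simpa using hj) hij h1 h2
    have := hcnt x hx
    omega
  refine ⟨fun x => if h : ∃ (i : ℕ) (hi : i < es.length),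
      Expr.Occurs x (es[i]'hi) ∧ σd x ≠ Expr.var x
    then F h.choose h.choose_spec.choose x else V x, ?_, ?_, ?_⟩
  · -- first: but we first establish the key equality as a `have` inside each goal
    intro x hex hx
    obtain ⟨e', he', hocc⟩ := hex
    obtain ⟨i, hi, rfl⟩ := List.mem_iff_getElem.mp he'
    have hcond : ∃ (i : ℕ) (hi : i < es.length),
        Expr.Occurs x (es[i]'hi) ∧ σd x ≠ Expr.var x := ⟨i, hi, hocc, hx⟩
    have hch := hcond.choose_spec.choose_spec
    have heq : hcond.choose = i :=
      huniq x hx _ i hcond.choose_spec.choose hi hch.1 hocc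
    beta_reduce
    rw [dif_pos hcond]
    obtain ⟨τx, hW, hT⟩ := (hF hcond.choose hcond.choose_spec.choose).1 x hch.1 hx
    exact ⟨τx, hW, hT⟩
  · intro x hx
    beta_reduce
    rw [dif_neg]
    rintro ⟨i, hi, hocc, hne⟩
    exact hx ⟨⟨es[i], List.getElem_mem hi, hocc⟩, hne⟩
  · intro p hp
    obtain ⟨i, hi, hpe⟩ := List.mem_iff_getElem.mp hp
    have hi1 : i < es.length := by simp [List.length_zip] at hi; omega
    have hi2 : i < τs.length := by simp [List.length_zip] at hi; omega
    rw [List.getElem_zip] at hpe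
    subst hpe
    refine hasType_of_agree (hF i hi1).2.2 ?_
    intro x hocc
    beta_reduce
    by_cases hx : σd x = Expr.var x
    · rw [dif_neg, (hF i hi1).2.1 x (by tauto)]
      rintro ⟨j, hj, _, hne⟩
      exact hne hx
    · have hcond : ∃ (j : ℕ) (hj : j < es.length),
          Expr.Occurs x (es[j]'hj) ∧ σd x ≠ Expr.var x := ⟨i, hi1, hocc, hx⟩
      rw [dif_pos hcond]
      have hch := hcond.choose_spec.choose_spec
      have heq : hcond.choose = i :=
        huniq x hx _ i hcond.choose_spec.choose hi1 hch.1 hocc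
      subst heq
      rfl

end Aux

lemma update_aux (Sg : Signature) : ∀ (n : ℕ) (e : Expr), sizeOf e ≤ n →
    ∀ (σd : ℕ → Expr), (∀ x : ℕ, σd x ≠ Expr.var x → Expr.varCount x e ≤ 1) →
    ∀ (V : Env) (τ' : Ty), HasType Sg V (e.subst σd) τ' →
    ∃ W : Env,
      (∀ x : ℕ, Expr.Occurs x e → σd x ≠ Expr.var x →
          ∃ τx : Ty, W x = some τx ∧ HasType Sg V (σd x) τx) ∧
      (∀ x : ℕ, ¬ (Expr.Occurs x e ∧ σd x ≠ Expr.var x) → W x = V x) ∧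
      HasType Sg W e τ' := by
  intro n
  induction n using Nat.strong_induction_on with
  | _ n ih =>
    intro e he σd hlin V τ' ht
    match e with
    | .var x0 =>
      rw [subst_var] at ht
      by_cases h0 : σd x0 = Expr.var x0
      · refine ⟨V, ?_, fun _ _ => rfl, ?_⟩
        · intro x hocc hx
          cases hocc
          exact absurd h0 hx
        · rw [h0] at ht
          exact ht
      · refine ⟨fun y => if y = x0 then some τ' else V y, ?_, ?_, ?_⟩
        · intro x hocc hx
          cases hocc
          exact ⟨τ', if_pos rfl, ht⟩
        · intro y hy
          have hne : y ≠ x0 := by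
            rintro rfl
            exact hy ⟨Expr.Occurs.var, h0⟩
          simp [hne]
        · exact HasType.var (if_pos rfl)
    | .bot =>
      rw [subst_bot] at ht
      refine ⟨V, ?_, fun _ _ => rfl, HasType.bot τ'⟩
      intro x hocc
      cases hocc
    | .con c es =>
      rw [subst_con] at ht
      cases ht with
      | @con _ _ d σt hd hlen hargs =>
        have hlen' : es.length = d.args.length := by simpa using hlen
        have hIH : ∀ (i : ℕ) (hi : i < es.length), ∃ W : Env,
            (∀ x, Expr.Occurs x es[i] → σd x ≠ Expr.var x →
              ∃ τx, W x = some τx ∧ HasType Sg V (σd x) τx) ∧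
            (∀ x, ¬(Expr.Occurs x es[i] ∧ σd x ≠ Expr.var x) → W x = V x) ∧
            HasType Sg W es[i]
              ((d.args.map (Ty.subst σt))[i]'(by simpa using hlen' ▸ hi)) := by
          intro i hi
          have hmem : es[i] ∈ es := List.getElem_mem hi
          have hsz : sizeOf es[i] < n := by
            have h1 := List.sizeOf_lt_of_mem hmem
            have h2 : sizeOf (Expr.con c es) ≤ n := he
            simp only [Expr.con.sizeOf_spec] at h2
            omega
          have hzmem : ((es.map (Expr.subst σd))[i]'(by simpa using hi),
              d.args[i]'(hlen' ▸ hi)) ∈ (es.map (Expr.subst σd)).zip d.args := by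
            have hi' : i < ((es.map (Expr.subst σd)).zip d.args).length := by
              simp [List.length_zip]
              omega
            have := List.getElem_mem hi'
            rwa [List.getElem_zip] at this
          have hty := hargs _ hzmem
          simp only [List.getElem_map] at hty
          have hres := ih (sizeOf es[i]) hsz es[i] le_rfl σd ?_ V
            (Ty.subst σt (d.args[i]'(hlen' ▸ hi))) hty
          · simpa using hres
          · intro x hx
            have h1 := hlin x hx
            rw [varCount_con] at h1
            have h2 : Expr.varCount x es[i] ∈ es.map (Expr.varCount x) :=
              List.mem_map.mpr ⟨es[i], hmem, rfl⟩
            have := List.single_le_sum (fun _ _ => Nat.zero_le _) _ h2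
            omega
        obtain ⟨W, h1, h2, h3⟩ := exists_W_list Sg V σd es (d.args.map (Ty.subst σt))
          (by simpa using hlen')
          (fun x hx => by have h1 := hlin x hx; rwa [varCount_con] at h1) hIH
        refine ⟨W, ?_, ?_, ?_⟩
        · intro x hocc hx
          cases hocc with
          | con he' hocc' => exact h1 x ⟨_, he', hocc'⟩ hx
        · intro x hx
          refine h2 x ?_
          rintro ⟨⟨e', he', ho⟩, hne⟩
          exact hx ⟨Expr.Occurs.con he' ho, hne⟩
        · refine HasType.con hd hlen' ?_
          intro p hp
          have hmem2 : (p.1, Ty.subst σt p.2) ∈ es.zip (d.args.map (Ty.subst σt)) := by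
            rw [List.zip_map_right]
            exact List.mem_map.mpr ⟨p, hp, rfl⟩
          exact h3 _ hmem2
    | .fn f es =>
      rw [subst_fn] at ht
      cases ht with
      | @fn _ _ d σt hd hlen hargs =>
        have hlen' : es.length = d.args.length := by simpa using hlen
        have hIH : ∀ (i : ℕ) (hi : i < es.length), ∃ W : Env,
            (∀ x, Expr.Occurs x es[i] → σd x ≠ Expr.var x →
              ∃ τx, W x = some τx ∧ HasType Sg V (σd x) τx) ∧
            (∀ x, ¬(Expr.Occurs x es[i] ∧ σd x ≠ Expr.var x) → W x = V x) ∧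
            HasType Sg W es[i]
              ((d.args.map (Ty.subst σt))[i]'(by simpa using hlen' ▸ hi)) := by
          intro i hi
          have hmem : es[i] ∈ es := List.getElem_mem hi
          have hsz : sizeOf es[i] < n := by
            have h1 := List.sizeOf_lt_of_mem hmem
            have h2 : sizeOf (Expr.fn f es) ≤ n := he
            simp only [Expr.fn.sizeOf_spec] at h2
            omega
          have hzmem : ((es.map (Expr.subst σd))[i]'(by simpa using hi),
              d.args[i]'(hlen' ▸ hi)) ∈ (es.map (Expr.subst σd)).zip d.args := by
            have hi' : i < ((es.map (Expr.subst σd)).zip d.args).length := by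
              simp [List.length_zip]
              omega
            have := List.getElem_mem hi'
            rwa [List.getElem_zip] at this
          have hty := hargs _ hzmem
          simp only [List.getElem_map] at hty
          have hres := ih (sizeOf es[i]) hsz es[i] le_rfl σd ?_ V
            (Ty.subst σt (d.args[i]'(hlen' ▸ hi))) hty
          · simpa using hres
          · intro x hx
            have h1 := hlin x hx
            rw [varCount_fn] at h1
            have h2 : Expr.varCount x es[i] ∈ es.map (Expr.varCount x) :=
              List.mem_map.mpr ⟨es[i], hmem, rfl⟩
            have := List.single_le_sum (fun _ _ => Nat.zero_le _) _ h2
            omega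
        obtain ⟨W, h1, h2, h3⟩ := exists_W_list Sg V σd es (d.args.map (Ty.subst σt))
          (by simpa using hlen')
          (fun x hx => by have h1 := hlin x hx; rwa [varCount_fn] at h1) hIH
        refine ⟨W, ?_, ?_, ?_⟩
        · intro x hocc hx
          cases hocc with
          | fn he' hocc' => exact h1 x ⟨_, he', hocc'⟩ hx
        · intro x hx
          refine h2 x ?_
          rintro ⟨⟨e', he', ho⟩, hne⟩
          exact hx ⟨Expr.Occurs.fn he' ho, hne⟩
        · refine HasType.fn hd hlen' ?_
          intro p hp
          have hmem2 : (p.1, Ty.subst σt p.2) ∈ es.zip (d.args.map (Ty.subst σt)) := by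
            rw [List.zip_map_right]
            exact List.mem_map.mpr ⟨p, hp, rfl⟩
          exact h3 _ hmem2

/-- Lemma 4.7: let `{x₁,…,x_m} = {x ∈ dvar(e) | xσd ≠ x}` with
`xᵢσd = t'ᵢ`, each `xᵢ` occurring at most once in `e`, and assume
`eσd ∈ Expr^{τ'}_{Σ⊥}(V)`.  Then there are types `τ'ᵢ` with
`t'ᵢ ∈ Term^{τ'ᵢ}_{Σ⊥}(V)` and `V[x₁:τ'₁,…,x_m:τ'_m] ⊢ e : τ'`
(the updated environment is the `W` below). -/
theorem update_of_hasType_subst (Sg : Signature) (e : Expr)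
    (σd : ℕ → Expr) (hσd : TermSub σd)
    (hlin : ∀ x : ℕ, σd x ≠ Expr.var x → Expr.varCount x e ≤ 1)
    (V : Env) (τ' : Ty) (ht : HasType Sg V (e.subst σd) τ') :
    ∃ W : Env,
      (∀ x : ℕ, Expr.Occurs x e → σd x ≠ Expr.var x →
          ∃ τx : Ty, W x = some τx ∧ HasType Sg V (σd x) τx) ∧
      (∀ x : ℕ, ¬ (Expr.Occurs x e ∧ σd x ≠ Expr.var x) → W x = V x) ∧
      HasType Sg W e τ' := by
  exact update_aux Sg (sizeOf e) e le_rfl σd hlin V τ' ht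

end ACRWL
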